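/- (Lemma 1, densification.) Let ‖·‖ be a norm on ℝⁿ, let 0 < α ≤ β, let 2 ≤ b, and let M ⊂ ℝⁿ be a finite set with |M| = m and b ≤ m, such that every subset S ⊆ M with |S| = b is α-β-connected. Set d = m − b. Then for every z ∈ M there exists a subset M_z ⊆ M \ {z} with |M_z| = d + 1 = m − b + 1 such that every z' ∈ M_z satisfies α ≤ ‖z − z'‖ ≤ β, i.e., M_z is contained in the closed annulus B(z, α, β) = {y ∈ ℝⁿ : α ≤ ‖y − z‖ ≤ β}. -/

import Mathlib

/-- `S` is α-β-connected (w.r.t. the norm `N` on `ℝⁿ`):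
(i) `α` is the minimum of the pairwise distances of `S`, and
(ii) `β` is the minimum of all `r ≥ 0` such that the graph on `S` joining two
distinct points exactly when their distance is `≤ r` is connected. -/
def ABConnected (n : ℕ) (N : (Fin n → ℝ) → ℝ) (α β : ℝ)
    (S : Finset (Fin n → ℝ)) : Prop :=
  IsLeast {d : ℝ | ∃ x ∈ S, ∃ y ∈ S, x ≠ y ∧ N (x - y) = d} α ∧
  IsLeast {r : ℝ | 0 ≤ r ∧
    (SimpleGraph.fromRel (fun a b : {x // x ∈ S} => N (a.1 - b.1) ≤ r)).Connected} β

/-- Lemma 1, densification: if every `b`-sized subset of `M`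
(`|M| = m ≥ b ≥ 2`) is α-β-connected (`0 < α ≤ β`), then for every `z ∈ M` there
are `m - b + 1` points of `M \ {z}` inside the closed annulus
`B(z, α, β) = {y : α ≤ ‖y − z‖ ≤ β}`. -/
theorem densification
    (n : ℕ) (N : (Fin n → ℝ) → ℝ)
    (hN_eq : ∀ x, N x = 0 ↔ x = 0)
    (hN_add : ∀ x y, N (x + y) ≤ N x + N y)
    (hN_smul : ∀ (a : ℝ) (x : Fin n → ℝ), N (a • x) = |a| * N x)
    (b m : ℕ) (hb : 2 ≤ b)
    (M : Finset (Fin n → ℝ)) (hM : M.card = m) (hbm : b ≤ m)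
    (α β : ℝ) (hα : 0 < α) (hαβ : α ≤ β)
    (hconn : ∀ S ⊆ M, S.card = b → ABConnected n N α β S) :
    ∀ z ∈ M, ∃ Mz : Finset (Fin n → ℝ), Mz ⊆ M.erase z ∧
      Mz.card = m - b + 1 ∧
      ∀ z' ∈ Mz, α ≤ N (z' - z) ∧ N (z' - z) ≤ β := by
  have hNsymm : ∀ x y : Fin n → ℝ, N (x - y) = N (y - x) := by
    intro x y
    have h := hN_smul (-1) (x - y)
    simpa [neg_sub] using h.symm
  intro z hz
  set A := (M.erase z).filter (fun z' => α ≤ N (z' - z) ∧ N (z' - z) ≤ β) with hA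
  have hcard : m - b + 1 ≤ A.card := by
    by_contra hlt
    push_neg at hlt
    have hAle : A.card ≤ m - b := by omega
    have h1 : A ⊆ M.erase z := Finset.filter_subset _ _
    have h2 : ((M.erase z) \ A).card = (M.erase z).card - A.card :=
      Finset.card_sdiff_of_subset h1
    have h3 : (M.erase z).card = m - 1 := by rw [Finset.card_erase_of_mem hz, hM]
    have hbad : b - 1 ≤ ((M.erase z) \ A).card := by omega
    obtain ⟨S', hS'sub, hS'card⟩ := Finset.exists_subset_card_eq hbad
    have hzS' : z ∉ S' := fun h =>
      (Finset.mem_erase.1 (Finset.mem_sdiff.1 (hS'sub h)).1).1 rfl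
    set S := insert z S' with hS
    have hScard : S.card = b := by
      rw [Finset.card_insert_of_notMem hzS', hS'card]; omega
    have hSsub : S ⊆ M := by
      intro x hx
      rcases Finset.mem_insert.1 hx with rfl | hx
      · exact hz
      · exact Finset.erase_subset _ _ (Finset.mem_sdiff.1 (hS'sub hx)).1
    obtain ⟨hleast, hβ⟩ := hconn S hSsub hScard
    have hlb : ∀ x ∈ S', β < N (x - z) := by
      intro x hx
      have hxz : x ≠ z := fun h => hzS' (h ▸ hx)
      have hge : α ≤ N (x - z) :=
        hleast.2 ⟨x, Finset.mem_insert_of_mem hx, z, Finset.mem_insert_self _ _, hxz, rfl⟩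
      have hxbad := (Finset.mem_sdiff.1 (hS'sub hx)).2
      have hxer := (Finset.mem_sdiff.1 (hS'sub hx)).1
      by_contra hle
      push_neg at hle
      exact hxbad (Finset.mem_filter.2 ⟨hxer, hge, hle⟩)
    obtain ⟨hβ0, hconn'⟩ := hβ.1
    have hS'ne : S'.Nonempty := Finset.card_pos.1 (by omega)
    obtain ⟨w, hw⟩ := hS'ne
    have hwz : w ≠ z := fun h => hzS' (h ▸ hw)
    have hreach := hconn'.preconnected ⟨z, Finset.mem_insert_self _ _⟩
      ⟨w, Finset.mem_insert_of_mem hw⟩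
    obtain ⟨p⟩ := hreach
    have hne' : (⟨z, Finset.mem_insert_self _ _⟩ : {x // x ∈ S}) ≠
        ⟨w, Finset.mem_insert_of_mem hw⟩ := fun h => hwz (congrArg Subtype.val h).symm
    have hadj := p.adj_snd (SimpleGraph.Walk.not_nil_of_ne hne')
    set v := p.getVert 1 with hv
    rw [SimpleGraph.fromRel_adj] at hadj
    obtain ⟨hne, hor⟩ := hadj
    have hvz : v.1 ≠ z := fun h => hne (Subtype.ext h.symm)
    have hvS' : v.1 ∈ S' := by
      rcases Finset.mem_insert.1 v.2 with h' | h'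
      · exact absurd h' hvz
      · exact h'
    have hle : N (v.1 - z) ≤ β := by
      rcases hor with h' | h'
      · rw [hNsymm]; exact h'
      · exact h'
    exact absurd hle (not_le.2 (hlb v.1 hvS'))
  obtain ⟨Mz, hMzsub, hMzcard⟩ := Finset.exists_subset_card_eq hcard
  refine ⟨Mz, fun x hx => Finset.filter_subset _ _ (hMzsub hx), hMzcard, ?_⟩
  intro z' hz'
  exact (Finset.mem_filter.1 (hMzsub hz')).2
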